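/- Let κ be an uncountable cardinal, let X be a compact metric space, and let E ⊆ X be a subset which, with the subspace topology, is zero-dimensional. Suppose there exist a compact metric space Y and a continuous function h : E → Y which is not uniformly continuous on any subset of E of cardinality κ. Then for every compact metric space Z of cardinality greater than ℵ₀ there exists a continuous function g : E → Z which is not uniformly continuous on any subset of E of cardinality κ. -/

import Mathlib

open Cardinal Set Metric TopologicalSpace

/-- In a second-countable space with a clopen basis, every finite open cover admits a
finite clopen refinement which still covers. -/
lemma clopen_partition {T : Type*} [TopologicalSpace T] [SecondCountableTopology T]
    (B : Set (Set T)) (hB : ∀ s ∈ B, IsClopen s) (hbasis : IsTopologicalBasis B)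
    {m : ℕ} (hm : 0 < m) (U : Fin m → Set T) (hUo : ∀ j, IsOpen (U j))
    (hcov : ∀ x, ∃ j, x ∈ U j) :
    ∃ W : Fin m → Set T, (∀ j, IsClopen (W j)) ∧ (∀ j, W j ⊆ U j) ∧
      (∀ x : T, ∃ j, x ∈ W j) := by
  classical
  set S : Set (Set T) := {b | b ∈ B ∧ ∃ j, b ⊆ U j} with hS
  obtain ⟨Tc, hTcc, hTcS, hTcU⟩ := isOpen_sUnion_countable S
    (fun s hs => (hB s hs.1).isOpen)
  have hTcov : ∀ x, ∃ b ∈ Tc, x ∈ b := by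
    intro x
    obtain ⟨j, hj⟩ := hcov x
    obtain ⟨b, hb, hxb, hbU⟩ := hbasis.exists_subset_of_mem_open hj (hUo j)
    have : x ∈ ⋃₀ S := ⟨b, ⟨hb, j, hbU⟩, hxb⟩
    rw [← hTcU] at this
    exact this
  -- enumerate `insert ∅ Tc`
  have hcnt : (insert (∅ : Set T) Tc).Countable := hTcc.insert _
  obtain ⟨c, hc⟩ := hcnt.exists_eq_range ⟨∅, mem_insert _ _⟩
  have hck : ∀ k, c k = ∅ ∨ c k ∈ Tc := by
    intro k
    have : c k ∈ insert (∅ : Set T) Tc := hc ▸ mem_range_self k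
    simpa using this
  have hcclopen : ∀ k, IsClopen (c k) := by
    intro k
    rcases hck k with h | h
    · rw [h]; exact isClopen_empty
    · exact hB _ (hTcS h).1
  have hcsub : ∀ k, ∃ j, c k ⊆ U (j : Fin m) := by
    intro k
    rcases hck k with h | h
    · exact ⟨⟨0, hm⟩, by rw [h]; exact empty_subset _⟩
    · exact (hTcS h).2
  choose r hr using hcsub
  have hccov : ∀ x, ∃ k, x ∈ c k := by
    intro x
    obtain ⟨b, hb, hxb⟩ := hTcov x
    have : b ∈ insert (∅ : Set T) Tc := mem_insert_of_mem _ hb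
    rw [hc] at this
    obtain ⟨k, rfl⟩ := this
    exact ⟨k, hxb⟩
  -- disjointify
  set D : ℕ → Set T := fun k => c k \ ⋃ i ∈ Finset.range k, c i with hD
  have hDclopen : ∀ k, IsClopen (D k) := by
    intro k
    exact (hcclopen k).diff ((Finset.range k).finite_toSet.isClopen_biUnion
      (fun i _ => hcclopen i))
  have hDsub : ∀ k, D k ⊆ c k := fun k => diff_subset
  have hDcov : ∀ x, ∃ k, x ∈ D k := by
    intro x
    have hex : ∃ k, x ∈ c k := hccov x
    refine ⟨Nat.find hex, Nat.find_spec hex, ?_⟩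
    simp only [Finset.mem_range, mem_iUnion, not_exists]
    intro i hi
    exact Nat.find_min hex hi
  have hDdisj : ∀ {i k : ℕ}, i ≠ k → Disjoint (D i) (D k) := by
    intro i k hik
    rcases hik.lt_or_gt with hlt | hlt
    · refine Set.disjoint_left.2 fun x hxi hxk => ?_
      exact hxk.2 (mem_biUnion (Finset.mem_range.2 hlt) hxi.1)
    · refine Set.disjoint_left.2 fun x hxi hxk => ?_
      exact hxi.2 (mem_biUnion (Finset.mem_range.2 hlt) hxk.1)
  -- group the pieces by assigned index
  set W : Fin m → Set T := fun j => ⋃ (k : ℕ) (_ : r k = j), D k with hW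
  have hWopen : ∀ j, IsOpen (W j) :=
    fun j => isOpen_iUnion fun k => isOpen_iUnion fun _ => (hDclopen k).isOpen
  have hWmem : ∀ {x j}, x ∈ W j ↔ ∃ k, r k = j ∧ x ∈ D k := by
    intro x j
    simp [hW, mem_iUnion]
  have hWcompl : ∀ j, (W j)ᶜ = ⋃ (k : ℕ) (_ : r k ≠ j), D k := by
    intro j
    ext x
    simp only [mem_compl_iff, hWmem, mem_iUnion, not_exists]
    constructor
    · intro hx
      obtain ⟨k, hk⟩ := hDcov x
      have : r k ≠ j := fun h => hx k ⟨h, hk⟩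
      exact ⟨k, this, hk⟩
    · rintro ⟨k, hrk, hxk⟩ k' ⟨hrk', hxk'⟩
      rcases eq_or_ne k k' with rfl | hne
      · exact hrk hrk'
      · exact (hDdisj hne).le_bot ⟨hxk, hxk'⟩ |>.elim
  have hWclopen : ∀ j, IsClopen (W j) := by
    intro j
    refine ⟨⟨?_⟩, hWopen j⟩
    rw [hWcompl j]
    exact isOpen_iUnion fun k => isOpen_iUnion fun _ => (hDclopen k).isOpen
  refine ⟨W, hWclopen, ?_, ?_⟩
  · intro j x hx
    obtain ⟨k, rfl, hxk⟩ := hWmem.1 hx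
    exact hr k (hDsub k hxk)
  · intro x
    obtain ⟨k, hk⟩ := hDcov x
    exact ⟨r k, hWmem.2 ⟨k, rfl, hk⟩⟩
open Set Metric

lemma cantor_sep {Z : Type*} [MetricSpace Z] (f : (ℕ → Bool) → Z) (hfc : Continuous f)
    (hfinj : Function.Injective f) (N : ℕ) :
    ∃ δ > (0 : ℝ), ∀ u v : ℕ → Bool, (∃ k < N, u k ≠ v k) → δ ≤ dist (f u) (f v) := by
  classical
  set T : Set ((ℕ → Bool) × (ℕ → Bool)) := {p | ∃ k < N, p.1 k ≠ p.2 k} with hT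
  have hTclosed : IsClosed T := by
    have hTeq : T = ⋃ k ∈ Finset.range N, {p : (ℕ → Bool) × (ℕ → Bool) | p.1 k ≠ p.2 k} := by
      ext p; simp [hT]
    rw [hTeq]
    refine isClosed_biUnion_finset fun k _ => ?_
    have hc : Continuous fun p : (ℕ → Bool) × (ℕ → Bool) => (p.1 k, p.2 k) :=
      ((continuous_apply k).comp continuous_fst).prodMk ((continuous_apply k).comp continuous_snd)
    exact (isClosed_discrete {q : Bool × Bool | q.1 ≠ q.2}).preimage hc
  have hTcompact : IsCompact T := hTclosed.isCompact
  rcases T.eq_empty_or_nonempty with hT0 | hTne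
  · exact ⟨1, one_pos, fun u v huv => absurd (show (u, v) ∈ T from huv) (by simp [hT0])⟩
  · have hφ : Continuous fun p : (ℕ → Bool) × (ℕ → Bool) => dist (f p.1) (f p.2) :=
      (hfc.comp continuous_fst).dist (hfc.comp continuous_snd)
    obtain ⟨p₀, hp₀, hmin⟩ := hTcompact.exists_isMinOn hTne hφ.continuousOn
    have hne : p₀.1 ≠ p₀.2 := by
      obtain ⟨k, -, hk⟩ := hp₀
      exact fun h => hk (by rw [h])
    refine ⟨dist (f p₀.1) (f p₀.2), dist_pos.2 fun h => hne (hfinj h), fun u v huv => ?_⟩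
    exact hmin (show (u, v) ∈ T from huv)
/-- If `E` is a zero-dimensional subset of a compact metric space `X` and there is a
continuous function from `E` to some compact metric space `Y` which is not uniformly
continuous on any subset of `E` of cardinality `κ`, then for every uncountable compact
metric space `Z` there is such a continuous function from `E` to `Z`. -/
theorem stmt_4 (κ : Cardinal.{0}) (hκ : aleph 0 < κ)
    (X : Type) [MetricSpace X] [CompactSpace X] (E : Set X)
    (hzerodim : ∃ B : Set (Set E), (∀ s ∈ B, IsClopen s) ∧
      TopologicalSpace.IsTopologicalBasis B)
    (hex : ∃ (Y : Type) (_ : MetricSpace Y) (_ : CompactSpace Y) (h : E → Y),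
      Continuous h ∧ ∀ A : Set E, #A = κ → ¬ UniformContinuousOn h A) :
    ∀ (Z : Type) [MetricSpace Z] [CompactSpace Z], aleph 0 < #Z →
      ∃ g : E → Z, Continuous g ∧
        ∀ A : Set E, #A = κ → ¬ UniformContinuousOn g A := by
  classical
  intro Z _ _ hZ
  -- `Z` contains a copy of the Cantor space
  have hZc : ¬ (Set.univ : Set Z).Countable := by
    rw [Set.countable_univ_iff]
    intro hcnt
    have hle : #Z ≤ ℵ₀ := Cardinal.mk_le_aleph0
    rw [Cardinal.aleph_zero] at hZ
    exact absurd hZ (not_lt.2 hle)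
  obtain ⟨f, -, hfc, hfinj⟩ := isClosed_univ.exists_nat_bool_injection_of_not_countable hZc
  rcases isEmpty_or_nonempty E with hE | hE
  · -- trivial case : `E` is empty
    have hZpos : (0 : Cardinal) < #Z := lt_of_le_of_lt zero_le hZ
    obtain ⟨z⟩ := Cardinal.mk_ne_zero_iff.1 hZpos.ne'
    refine ⟨fun _ => z, continuous_const, fun A hA _ => ?_⟩
    have hA0 : #A = 0 := Cardinal.mk_eq_zero _
    rw [hA0] at hA
    rw [← hA, Cardinal.aleph_zero] at hκ
    exact absurd hκ (by simp)
  obtain ⟨B, hBclopen, hBbasis⟩ := hzerodim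
  obtain ⟨Y, _, _, h, hcont, hnotUC⟩ := hex
  have hYne : Nonempty Y := ⟨h (Classical.arbitrary E)⟩
  obtain ⟨y₀⟩ := hYne
  -- finite ball covers of `Y`
  have hcov : ∀ n : ℕ, ∃ mm : ℕ, 0 < mm ∧ ∃ cc : ℕ → Y,
      ∀ y : Y, ∃ j < mm, dist y (cc j) < 1 / (n + 1 : ℝ) := by
    intro n
    have hpos : (0 : ℝ) < 1 / (n + 1 : ℝ) := by positivity
    obtain ⟨t, -, htfin, htcov⟩ := finite_cover_balls_of_compact (isCompact_univ : IsCompact (Set.univ : Set Y)) hpos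
    set l : List Y := htfin.toFinset.toList with hl
    have hmem : ∀ y : Y, ∃ x ∈ t, y ∈ Metric.ball x (1 / (n + 1 : ℝ)) := by
      intro y
      have := htcov (Set.mem_univ y)
      simpa using this
    have hlen : 0 < l.length := by
      obtain ⟨x, hx, -⟩ := hmem y₀
      have : x ∈ htfin.toFinset := htfin.mem_toFinset.2 hx
      have : x ∈ l := Finset.mem_toList.2 this
      exact List.length_pos_iff.2 (List.ne_nil_of_mem this)
    refine ⟨l.length, hlen, fun j => l.getD j y₀, fun y => ?_⟩
    obtain ⟨x, hx, hball⟩ := hmem y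
    have hxl : x ∈ l := Finset.mem_toList.2 (htfin.mem_toFinset.2 hx)
    obtain ⟨i, hi, hieq⟩ := List.mem_iff_getElem.1 hxl
    refine ⟨i, hi, ?_⟩
    show dist y (l.getD i y₀) < 1 / (n + 1 : ℝ)
    rw [List.getD_eq_getElem l y₀ hi, hieq]
    exact Metric.mem_ball.1 hball
  choose m hm c hc using hcov
  -- clopen partitions of `E` refining the pulled-back covers
  have hW : ∀ n : ℕ, ∃ W : Fin (m n) → Set E, (∀ j, IsClopen (W j)) ∧
      (∀ j, W j ⊆ (fun x => h x) ⁻¹' Metric.ball (c n j.1) (1 / (n + 1 : ℝ))) ∧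
      (∀ x : E, ∃ j, x ∈ W j) := by
    intro n
    refine clopen_partition B hBclopen hBbasis (hm n)
      (fun j => (fun x => h x) ⁻¹' Metric.ball (c n j.1) (1 / (n + 1 : ℝ)))
      (fun j => Metric.isOpen_ball.preimage hcont) (fun x => ?_)
    obtain ⟨j, hj, hjd⟩ := hc n (h x)
    exact ⟨⟨j, hj⟩, Metric.mem_ball.2 hjd⟩
  choose W hWclopen hWsub hWcov using hW
  -- encode all partitions into one map to the Cantor space
  set C : ℕ → Set E := fun k =>
    if hk : (Nat.unpair k).2 < m (Nat.unpair k).1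
      then W (Nat.unpair k).1 ⟨(Nat.unpair k).2, hk⟩ else ∅ with hCdef
  have hCclopen : ∀ k, IsClopen (C k) := by
    intro k
    rw [hCdef]
    dsimp only
    split
    · exact hWclopen _ _
    · exact isClopen_empty
  set g₀ : E → ℕ → Bool := fun x k => (C k).boolIndicator x with hg₀
  have hg₀c : Continuous g₀ :=
    continuous_pi fun k => (continuous_boolIndicator_iff_isClopen (C k)).2 (hCclopen k)
  refine ⟨f ∘ g₀, hfc.comp hg₀c, fun A hA hUC => ?_⟩
  refine hnotUC A hA ?_
  rw [Metric.uniformContinuousOn_iff] at hUC ⊢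
  intro ε hε
  obtain ⟨n, hn⟩ := exists_nat_one_div_lt (half_pos hε)
  obtain ⟨δ₁, hδ₁, hsep⟩ := cantor_sep f hfc hfinj (Nat.pair n (m n))
  obtain ⟨δ, hδ, hδ'⟩ := hUC δ₁ hδ₁
  refine ⟨δ, hδ, fun x hx y hy hxy => ?_⟩
  have h1 : dist (f (g₀ x)) (f (g₀ y)) < δ₁ := hδ' x hx y hy hxy
  have h2 : ∀ k < Nat.pair n (m n), g₀ x k = g₀ y k := by
    intro k hk
    by_contra hne
    exact absurd (hsep (g₀ x) (g₀ y) ⟨k, hk, hne⟩) (not_le.2 h1)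
  obtain ⟨⟨jv, hjv⟩, hj⟩ := hWcov n x
  have hCj : C (Nat.pair n jv) = W n ⟨jv, hjv⟩ := by
    rw [hCdef]
    dsimp only
    rw [Nat.unpair_pair]
    exact dif_pos hjv
  have hyj : y ∈ W n ⟨jv, hjv⟩ := by
    have hkN : Nat.pair n jv < Nat.pair n (m n) := Nat.pair_lt_pair_right n hjv
    have heq := h2 _ hkN
    rw [hg₀] at heq
    simp only [hCj] at heq
    have hxtrue : (W n ⟨jv, hjv⟩).boolIndicator x = true :=
      (Set.mem_iff_boolIndicator _ x).1 hj
    rw [Set.mem_iff_boolIndicator, ← heq]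
    exact hxtrue
  have hdx : dist (h x) (c n jv) < 1 / (n + 1 : ℝ) :=
    Metric.mem_ball.1 (hWsub n ⟨jv, hjv⟩ hj)
  have hdy : dist (h y) (c n jv) < 1 / (n + 1 : ℝ) :=
    Metric.mem_ball.1 (hWsub n ⟨jv, hjv⟩ hyj)
  have htri : dist (h x) (h y) ≤ dist (h x) (c n jv) + dist (h y) (c n jv) :=
    dist_triangle_right _ _ _
  linarith
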